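/- arXiv:0801.1060 — 3 statements merged into one kernel-verified Lean document; each statement's English description precedes it below -/
import Mathlib

section
/- For a binary word u = u_1 u_2 … u_r of length r > 2^j − 1, if u* = ψ^{2^j − 1}(u), then the i-th letter of u* equals u_i + u_{i+1} + ⋯ + u_{i+2^j−1} mod 2, for all 1 ≤ i ≤ r − (2^j − 1). -/
/-- The sliding-block map ψ on binary words: ψ(u₁…uₙ) = u*₁…u*ₙ₋₁ with u*ᵢ = uᵢ + uᵢ₊₁ (mod 2). -/
def psiW : List (ZMod 2) → List (ZMod 2)
  | a :: b :: rest => (a + b) :: psiW (b :: rest)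
  | _ => []

/-- The forbidden sets: F 1 = {0}, F (k+1) = ψ⁻¹(F k). -/
def F : ℕ → Set (List (ZMod 2))
  | 0 => ∅
  | 1 => {[(0 : ZMod 2)]}
  | (k + 1) => psiW ⁻¹' F k

lemma psiW_length (u : List (ZMod 2)) : (psiW u).length = u.length - 1 := by
  match u with
  | [] => rfl
  | [a] => rfl
  | a :: b :: rest =>
    show (psiW (b :: rest)).length + 1 = _
    rw [psiW_length (b :: rest)]
    simp

lemma psiW_getD (u : List (ZMod 2)) (k : ℕ) (hk : k + 1 < u.length) :
    (psiW u).getD k 0 = u.getD k 0 + u.getD (k + 1) 0 := by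
  match u, k with
  | a :: b :: rest, 0 => rfl
  | a :: b :: rest, (k + 1) =>
    show (psiW (b :: rest)).getD k 0 = _
    rw [psiW_getD (b :: rest) k (by simpa using hk)]
    rfl

lemma psiW_iter (m : ℕ) : ∀ (u : List (ZMod 2)) (i : ℕ), i + m < u.length →
    (psiW^[m] u).getD i 0 =
      ∑ t ∈ Finset.range (m + 1), (m.choose t : ZMod 2) * u.getD (i + t) 0 := by
  induction m with
  | zero => intro u i h; simp
  | succ m ih =>
    intro u i h
    rw [Function.iterate_succ_apply]
    rw [ih (psiW u) i (by rw [psiW_length]; omega)]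
    have key : ∀ t ∈ Finset.range (m + 1),
        (m.choose t : ZMod 2) * (psiW u).getD (i + t) 0 =
        (m.choose t : ZMod 2) * u.getD (i + t) 0
          + (m.choose t : ZMod 2) * u.getD (i + t + 1) 0 := by
      intro t ht
      rw [psiW_getD u (i + t) (by simp at ht; omega), mul_add]
    rw [Finset.sum_congr rfl key, Finset.sum_add_distrib]
    have hA : ∑ t ∈ Finset.range (m + 1), (m.choose t : ZMod 2) * u.getD (i + t) 0
        = (∑ t ∈ Finset.range (m + 1), (m.choose (t + 1) : ZMod 2) * u.getD (i + t + 1) 0)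
          + u.getD i 0 := by
      rw [Finset.sum_range_succ' (fun t => (m.choose t : ZMod 2) * u.getD (i + t) 0) m]
      rw [Finset.sum_range_succ
        (fun t => (m.choose (t + 1) : ZMod 2) * u.getD (i + t + 1) 0) m]
      simp only [Nat.choose_succ_self, Nat.cast_zero, zero_mul, add_zero, Nat.choose_zero_right,
        Nat.cast_one, one_mul, Nat.add_zero]
      ring_nf
      rw [add_comm]; congr 1; apply Finset.sum_congr rfl; intro x _; rw [show 1 + x + i = 1 + i + x by omega]
    have hR : ∑ t ∈ Finset.range (m + 1 + 1), ((m + 1).choose t : ZMod 2) * u.getD (i + t) 0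
        = (∑ t ∈ Finset.range (m + 1), ((m + 1).choose (t + 1) : ZMod 2) * u.getD (i + t + 1) 0)
          + u.getD i 0 := by
      rw [Finset.sum_range_succ' (fun t => ((m + 1).choose t : ZMod 2) * u.getD (i + t) 0) (m + 1)]
      simp only [Nat.choose_zero_right, Nat.cast_one, one_mul, Nat.add_zero]
      ring_nf
      rw [add_comm]; congr 1; apply Finset.sum_congr rfl; intro x _; rw [show 1 + x + i = 1 + i + x by omega]
    rw [hA, hR]
    have hsplit : ∀ t ∈ Finset.range (m + 1),
        ((m + 1).choose (t + 1) : ZMod 2) * u.getD (i + t + 1) 0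
        = (m.choose t : ZMod 2) * u.getD (i + t + 1) 0
          + (m.choose (t + 1) : ZMod 2) * u.getD (i + t + 1) 0 := by
      intro t _
      rw [Nat.choose_succ_succ, Nat.cast_add]
      ring
    rw [Finset.sum_congr rfl hsplit, Finset.sum_add_distrib]
    abel

lemma choose_odd (j t : ℕ) (ht : t < 2 ^ j) : ((2 ^ j - 1).choose t : ZMod 2) = 1 := by
  have hp : Fact (Nat.Prime 2) := ⟨Nat.prime_two⟩
  have h := Choose.choose_modEq_prod_range_choose_nat (p := 2) (n := 2 ^ j - 1) (k := t)
    (a := j) (by omega) (by omega)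
  have hprod : ∏ i ∈ Finset.range j, ((2 ^ j - 1) / 2 ^ i % 2).choose (t / 2 ^ i % 2) = 1 := by
    apply Finset.prod_eq_one
    intro i hi
    simp only [Finset.mem_range] at hi
    have hdiv : (2 ^ j - 1) / 2 ^ i % 2 = 1 := by
      set a := 2 ^ (j - i) with ha
      set b := 2 ^ i with hb
      have hb1 : 1 ≤ b := Nat.one_le_two_pow
      have hab : 2 ^ j = a * b := by rw [ha, hb, ← pow_add]; congr 1; omega
      have h1 : (a - 1) * b = a * b - b := by rw [Nat.sub_mul, one_mul]
      have h2 : b ≤ a * b := Nat.le_mul_of_pos_left b (by positivity)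
      have hrepr : 2 ^ j - 1 = b * (a - 1) + (b - 1) := by rw [mul_comm]; omega
      rw [hrepr, Nat.mul_add_div (by omega), Nat.div_eq_of_lt (by omega), add_zero]
      have haeven : a % 2 = 0 := by
        rw [ha]
        have : j - i = (j - i - 1) + 1 := by omega
        rw [this, pow_succ, Nat.mul_mod_left]
      have ha2 : 2 ≤ a := by
        have : 1 ≤ a := Nat.one_le_two_pow
        omega
      omega
    rw [hdiv]
    rcases Nat.mod_two_eq_zero_or_one (t / 2 ^ i) with h' | h' <;> rw [h'] <;> rfl
  rw [hprod] at h
  have := (ZMod.natCast_eq_natCast_iff _ _ 2).mpr h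
  simpa using this

/-- for a word u of length r > 2^j − 1, the i-th letter of ψ^{2^j−1}(u) equals
uᵢ + uᵢ₊₁ + ⋯ + u_{i+2^j−1} (mod 2), zero-indexed. -/
theorem stmt_1 (j r : ℕ) (u : List (ZMod 2)) (hu : u.length = r) (hr : 2 ^ j - 1 < r)
    (i : ℕ) (hi : i < r - (2 ^ j - 1)) :
    (psiW^[2 ^ j - 1] u).getD i 0 = ∑ t ∈ Finset.range (2 ^ j), u.getD (i + t) 0 := by
  have h1 : (1:ℕ) ≤ 2 ^ j := Nat.one_le_two_pow
  have := psiW_iter (2 ^ j - 1) u i (by omega)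
  rw [show 2 ^ j - 1 + 1 = 2 ^ j by omega] at this
  rw [this]
  apply Finset.sum_congr rfl
  intro t ht
  rw [choose_odd j t (Finset.mem_range.mp ht), one_mul]
end

section
/- If a binary word z of length 2^j (for some j ≥ 0) contains an odd number of 1's, then z does not belong to F_{2^j}. -/
lemma psiW_eq_zipWith (z : List (ZMod 2)) : psiW z = List.zipWith (· + ·) z (z.drop 1) := by
  match z with
  | [] => rfl
  | [a] => rfl
  | a :: b :: r =>
      show (a + b) :: psiW (b :: r) = _
      rw [psiW_eq_zipWith (b :: r)]
      rfl

lemma zip3 (a b c : List (ZMod 2)) (h : c.length ≤ b.length) :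
    List.zipWith (· + ·) (List.zipWith (· + ·) a b) (List.zipWith (· + ·) b c)
      = List.zipWith (· + ·) a c := by
  apply List.ext_getElem
  · simp only [List.length_zipWith]
    omega
  · intro i h1 h2
    simp only [List.getElem_zipWith]
    exact (show ∀ x y z : ZMod 2, (x + y) + (y + z) = x + z by decide) _ _ _

lemma psiW_iterate_pow (m : ℕ) (z : List (ZMod 2)) :
    psiW^[2 ^ m] z = List.zipWith (· + ·) z (z.drop (2 ^ m)) := by
  induction m generalizing z with
  | zero => simpa using psiW_eq_zipWith z
  | succ m ih =>
      have h2 : 2 ^ (m + 1) = 2 ^ m + 2 ^ m := by ring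
      rw [h2, Function.iterate_add_apply, ih, ih]
      rw [List.drop_zipWith]
      rw [List.drop_drop]
      rw [zip3 z (z.drop (2 ^ m)) (z.drop (2 ^ m + 2 ^ m))
        (by simp only [List.length_drop]
            exact Nat.sub_le_sub_left (Nat.le_add_right _ _) _)]

lemma sum_zipWith (a b : List (ZMod 2)) (h : a.length = b.length) :
    (List.zipWith (· + ·) a b).sum = a.sum + b.sum := by
  induction a generalizing b with
  | nil => cases b with
    | nil => simp
    | cons x t => simp at h
  | cons x t ih =>
      cases b with
      | nil => simp at h
      | cons y s =>
          simp only [List.zipWith_cons_cons, List.sum_cons, ih s (by simpa using h)]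
          ring

lemma zipWith_append_left (a b : List (ZMod 2)) (h : a.length = b.length) :
    List.zipWith (· + ·) (a ++ b) b = List.zipWith (· + ·) a b := by
  conv_lhs => rw [show b = b ++ [] by simp]
  rw [List.zipWith_append h]
  simp

lemma psiW_iterate_sum (j : ℕ) (z : List (ZMod 2)) (hz : z.length = 2 ^ j) :
    psiW^[2 ^ j - 1] z = [z.sum] := by
  induction j generalizing z with
  | zero =>
      match z, hz with
      | [a], _ => simp
  | succ j ih =>
      have h1 : 2 ^ (j + 1) - 1 = (2 ^ j - 1) + 2 ^ j := by
        have : 0 < 2 ^ j := Nat.pow_pos (by norm_num)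
        omega
      rw [h1, Function.iterate_add_apply, psiW_iterate_pow]
      set w := List.zipWith (· + ·) z (z.drop (2 ^ j)) with hw
      have hwl : w.length = 2 ^ j := by
        simp [hw, hz]
        omega
      rw [ih w hwl]
      congr 1
      -- w.sum = z.sum
      have hsplit : z = z.take (2 ^ j) ++ z.drop (2 ^ j) := (List.take_append_drop _ _).symm
      have hta : (z.take (2 ^ j)).length = 2 ^ j := by simp [hz]; omega
      have htb : (z.drop (2 ^ j)).length = 2 ^ j := by simp [hz]; omega
      have hwz : w = List.zipWith (· + ·) (z.take (2 ^ j)) (z.drop (2 ^ j)) := by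
        have h5 := zipWith_append_left (z.take (2 ^ j)) (z.drop (2 ^ j)) (hta.trans htb.symm)
        rw [List.take_append_drop] at h5
        rw [hw, h5]
      rw [hwz, sum_zipWith _ _ (by rw [hta, htb])]
      conv_rhs => rw [hsplit]
      rw [List.sum_append]

lemma mem_F_iff (k : ℕ) (z : List (ZMod 2)) :
    z ∈ F (k + 1) ↔ psiW^[k] z = [0] := by
  induction k generalizing z with
  | zero => simp [F]
  | succ k ih =>
      show z ∈ psiW ⁻¹' F (k + 1) ↔ _
      rw [Set.mem_preimage, ih, Function.iterate_succ_apply]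

lemma sum_eq_count (z : List (ZMod 2)) : z.sum = (z.count (1 : ZMod 2) : ZMod 2) := by
  induction z with
  | nil => simp
  | cons x t ih =>
      rcases (show ∀ x : ZMod 2, x = 0 ∨ x = 1 by decide) x with rfl | rfl <;> simp [List.count_cons, ih] <;> push_cast <;> ring_nf

/-- if z has length 2^j and an odd number of 1's, then z ∉ F_{2^j}. -/
theorem stmt_6 (j : ℕ) (z : List (ZMod 2)) (hz : z.length = 2 ^ j)
    (hodd : Odd (z.count (1 : ZMod 2))) : z ∉ F (2 ^ j) := by
  intro hmem
  have hpos : 0 < 2 ^ j := Nat.pow_pos (by norm_num)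
  have h1 : 2 ^ j = (2 ^ j - 1) + 1 := by omega
  rw [h1] at hmem
  rw [mem_F_iff] at hmem
  rw [psiW_iterate_sum j z hz] at hmem
  have hsum : z.sum = 0 := by simpa using hmem
  rw [sum_eq_count] at hsum
  obtain ⟨n, hn⟩ := hodd
  rw [hn] at hsum
  push_cast at hsum
  simp [show (2 : ZMod 2) = 0 from rfl] at hsum
end

section
/- For any j ≥ 0, there is no periodic bi-infinite sequence x in the PFT X_{2^j+1} whose period is (2t+1)·2^j for some t ≥ 0. Here x ∈ X_{2^j+1} means: there exists r ∈ {0,1} such that for every even integer i, the length-(2^j+1) subword of σ^r(x) starting at position i is not in F_{2^j+1}. -/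
/-- ψ on bi-infinite binary sequences. -/
def psiZ (x : ℤ → ZMod 2) : ℤ → ZMod 2 := fun i => x i + x (i + 1)

/-- Length-`k` subword of `x` starting at index `i`. -/
def subword (x : ℤ → ZMod 2) (i : ℤ) (k : ℕ) : List (ZMod 2) :=
  (List.range k).map fun t => x (i + t)

/-- Membership in the PFT X_k: for some shift r ∈ {0,1}, no subword of σʳ(x) starting at an
even index belongs to F k. -/
def inX (k : ℕ) (x : ℤ → ZMod 2) : Prop :=
  ∃ r : ℕ, r < 2 ∧ ∀ i : ℤ, Even i → subword x (i + r) k ∉ F k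

lemma zmod2_add_self : ∀ a : ZMod 2, a + a = 0 := by decide

lemma zmod2_add_eq_zero : ∀ a b : ZMod 2, a + b = 0 ↔ a = b := by decide

lemma zmod2_ne : ∀ a b : ZMod 2, a ≠ b → b = a + 1 := by decide

lemma list_bind_cast (l : List ℕ) :
    (do let a ← l; pure ((a:ℤ)) : List ℤ) = l.map (Nat.cast : ℕ → ℤ) := by
  induction l with
  | nil => rfl
  | cons a l ih => simpa using ih

lemma subword_eq (x : ℤ → ZMod 2) (i : ℤ) (k : ℕ) :
    subword x i k = (List.range k).map (fun t : ℕ => x (i + (t:ℤ))) := by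
  unfold subword
  rw [list_bind_cast, List.map_map]
  rfl

lemma subword_succ (x : ℤ → ZMod 2) (i : ℤ) (n : ℕ) :
    subword x i (n + 1) = x i :: subword x (i + 1) n := by
  rw [subword_eq, subword_eq, List.range_succ_eq_map, List.map_cons, List.map_map]
  congr 1
  · norm_num
  · apply List.map_congr_left
    intro t _
    simp only [Function.comp_apply]
    congr 1
    push_cast
    ring

lemma psiW_subword (x : ℤ → ZMod 2) (n : ℕ) (i : ℤ) :
    psiW (subword x i (n + 2)) = subword (psiZ x) i (n + 1) := by
  induction n generalizing i with
  | zero =>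
    rw [subword_succ, subword_succ, subword_succ]
    simp [subword, psiW, psiZ]
  | succ m ih =>
    rw [show m + 1 + 2 = (m + 2) + 1 from rfl, subword_succ]
    rw [show subword x (i+1) (m+2) = x (i+1) :: subword x (i+1+1) (m+1) from subword_succ ..]
    rw [show psiW (x i :: x (i+1) :: subword x (i+1+1) (m+1))
        = (x i + x (i+1)) :: psiW (x (i+1) :: subword x (i+1+1) (m+1)) from rfl]
    rw [← subword_succ, ih]
    rw [show subword (psiZ x) i (m+1+1) = psiZ x i :: subword (psiZ x) (i+1) (m+1)
        from subword_succ .., show subword (psiZ x) (i+1) (m+1)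
        = psiZ x (i+1) :: subword (psiZ x) (i+1+1) m from subword_succ ..]
    rfl

lemma F_step (k : ℕ) : F (k + 2) = psiW ⁻¹' F (k + 1) := rfl

lemma mem_iff_iter (m : ℕ) : ∀ (n : ℕ), 1 ≤ n → ∀ (x : ℤ → ZMod 2) (i : ℤ),
    (subword x i (n + m) ∈ F (n + m) ↔ subword (psiZ^[m] x) i n ∈ F n) := by
  induction m with
  | zero => intro n _ x i; simp
  | succ m ih =>
    intro n hn x i
    obtain ⟨n', rfl⟩ : ∃ n', n = n' + 1 := ⟨n - 1, by omega⟩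
    have h1 : n' + 1 + (m + 1) = (n' + m) + 2 := by omega
    rw [h1, F_step, Set.mem_preimage, psiW_subword]
    have h2 : n' + m + 1 = (n' + 1) + m := by omega
    rw [h2, ih (n' + 1) (by omega) (psiZ x) i, Function.iterate_succ_apply]

lemma psiZ_pow (j : ℕ) : ∀ (x : ℤ → ZMod 2) (i : ℤ),
    psiZ^[2 ^ j] x i = x i + x (i + (2 ^ j : ℕ)) := by
  induction j with
  | zero => intro x i; simp [psiZ]
  | succ j ih =>
    intro x i
    have h : 2 ^ (j + 1) = 2 ^ j + 2 ^ j := by ring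
    rw [h, Function.iterate_add_apply, ih, ih, ih]
    have hcast : (i + (2^j : ℕ)) + (2^j : ℕ) = i + ((2^j + 2^j : ℕ) : ℤ) := by push_cast; ring
    rw [hcast]
    generalize x i = a
    generalize x (i + ((2^j : ℕ) : ℤ)) = b
    generalize x (i + ((2^j + 2^j : ℕ) : ℤ)) = c
    linear_combination zmod2_add_self b

lemma mem_F_iff_s11 (j : ℕ) (x : ℤ → ZMod 2) (i : ℤ) :
    subword x i (2 ^ j + 1) ∈ F (2 ^ j + 1) ↔ x i = x (i + (2 ^ j : ℕ)) := by
  have h : 2 ^ j + 1 = 1 + 2 ^ j := by omega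
  rw [h, mem_iff_iter (2 ^ j) 1 le_rfl x i]
  have hs : subword (psiZ^[2 ^ j] x) i 1 = [psiZ^[2 ^ j] x i] := by
    rw [subword_succ]; rfl
  rw [hs, psiZ_pow j x i]
  show _ ∈ ({[(0 : ZMod 2)]} : Set _) ↔ _
  simp only [Set.mem_singleton_iff, List.cons.injEq, and_true]
  exact zmod2_add_eq_zero _ _

/-- for any j ≥ 0, no periodic sequence in the PFT X_{2^j+1} has
(2t+1)·2^j as a period. -/
theorem stmt_11 (j t : ℕ) (x : ℤ → ZMod 2) (hx : inX (2 ^ j + 1) x) :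
    ¬ ∀ i : ℤ, x (i + (2 * t + 1) * 2 ^ j) = x i := by
  intro hp
  obtain ⟨r, _, h⟩ := hx
  have key : ∀ i : ℤ, Even i → x (i + r) ≠ x (i + r + (2 ^ j : ℕ)) := by
    intro i hi heq
    exact h i hi ((mem_F_iff_s11 j x (i + r)).mpr heq)
  have step : ∀ m : ℤ, x (m * 2 ^ j + (2 ^ j : ℕ) + r) = x (m * 2 ^ j + r) + 1 := by
    intro m
    rcases Int.even_or_odd (m * 2 ^ j) with he | ho
    · have := zmod2_ne _ _ (key (m * 2 ^ j) he)
      rw [show m * 2 ^ j + (2 ^ j : ℕ) + r = m * 2 ^ j + r + (2 ^ j : ℕ) by ring]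
      exact this
    · -- m * 2^j odd, so 2^j odd, so (2t+1)*2^j odd
      have h2j : Odd ((2 : ℤ) ^ j) := (Int.odd_mul.mp ho).2
      have hodd : Odd ((2 * (t : ℤ) + 1) * 2 ^ j) :=
        Int.odd_mul.mpr ⟨⟨t, by ring⟩, h2j⟩
      have heven : Even (m * 2 ^ j + (2 * (t : ℤ) + 1) * 2 ^ j) := ho.add_odd hodd
      have hk := zmod2_ne _ _ (key _ heven)
      have e1 : m * 2 ^ j + (2 * (t : ℤ) + 1) * 2 ^ j + r
          = (m * 2 ^ j + r) + (2 * (t : ℤ) + 1) * 2 ^ j := by ring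
      have e2 : m * 2 ^ j + r + (2 * (t : ℤ) + 1) * 2 ^ j + (2 ^ j : ℕ)
          = (m * 2 ^ j + (2 ^ j : ℕ) + r) + (2 * (t : ℤ) + 1) * 2 ^ j := by push_cast; ring
      rw [e1, e2, hp, hp] at hk
      exact hk
  have main : ∀ n : ℕ, x ((n : ℤ) * 2 ^ j + r) = x r + n := by
    intro n
    induction n with
    | zero => simp
    | succ n ih =>
      have e : ((n : ℤ) + 1) * 2 ^ j + r = (n : ℤ) * 2 ^ j + (2 ^ j : ℕ) + r := by
        push_cast; ring
      push_cast
      rw [e, step, ih]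
      ring
  have h1 := main (2 * t + 1)
  have h2 := hp r
  rw [show (r : ℤ) + (2 * (t : ℤ) + 1) * 2 ^ j = ((2 * t + 1 : ℕ) : ℤ) * 2 ^ j + r by
    push_cast; ring] at h2
  rw [h2] at h1
  have hc : ((2 * t + 1 : ℕ) : ZMod 2) = 1 := by
    push_cast
    rw [show ((2 : ZMod 2)) = 0 by decide]
    ring
  rw [hc] at h1
  have : (1 : ZMod 2) = 0 := by
    have := left_eq_add.mp h1
    exact this
  exact one_ne_zero this
end
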